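/- A torsion-free group G has BVC if and only if there exist finitely many elements g₁, ..., gₙ in G such that every element of G is conjugate to a power of some gᵢ. -/

import Mathlib

def IsVirtuallyCyclic (G : Type*) [Group G] : Prop :=
  ∃ H : Subgroup G, IsCyclic H ∧ H.FiniteIndex

def HasBVC (G : Type*) [Group G] : Prop :=
  ∃ S : Finset (Subgroup G), (∀ V ∈ S, IsVirtuallyCyclic V) ∧
    ∀ W : Subgroup G, IsVirtuallyCyclic W →
      ∃ V ∈ S, ∃ g : G, W.map (MulAut.conj g).toMonoidHom ≤ V

open Subgroup

theorem isCyclic_of_injective' {A B : Type*} [Group A] [Group B] [IsCyclic B] (f : A →* B)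
    (hf : Function.Injective f) : IsCyclic A := by
  have e := MonoidHom.ofInjective hf
  have : IsCyclic f.range := Subgroup.isCyclic _
  exact isCyclic_of_surjective e.symm e.symm.surjective

theorem isCyclic_zpowers' {A : Type*} [Group A] (w : A) : IsCyclic ↥(zpowers w) := by
  refine ⟨⟨⟨w, mem_zpowers w⟩, fun x => ?_⟩⟩
  obtain ⟨k, hk⟩ := x.2
  exact ⟨k, Subtype.ext (by simpa using hk)⟩

theorem cyclic_of_comm_tf {A : Type*} [CommGroup A] (htf : ∀ g : A, g ≠ 1 → ¬ IsOfFinOrder g)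
    (w : A) (hfi : (zpowers w).FiniteIndex) : IsCyclic A := by
  set n := (zpowers w).index with hn
  have hn0 : n ≠ 0 := hfi.index_ne_zero
  have hmem : ∀ a : A, a ^ n ∈ zpowers w := fun a => (zpowers w).pow_index_mem a
  let f : A →* ↥(zpowers w) := (powMonoidHom n).codRestrict _ hmem
  have hinj : Function.Injective f := by
    rw [injective_iff_map_eq_one]
    intro a ha
    by_contra h1
    exact htf a h1 (isOfFinOrder_iff_pow_eq_one.mpr ⟨n, Nat.pos_of_ne_zero hn0, by
      have := congrArg (Subtype.val) ha
      simpa [f, powMonoidHom] using this⟩)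
  have : IsCyclic ↥(zpowers w) := isCyclic_zpowers' w
  exact isCyclic_of_injective' f hinj

theorem htf_subgroup {G : Type*} [Group G] (htf : ∀ g : G, g ≠ 1 → ¬ IsOfFinOrder g)
    (H : Subgroup G) : ∀ g : ↥H, g ≠ 1 → ¬ IsOfFinOrder g := by
  intro g hg hfo
  exact htf ↑g (fun h => hg (OneMemClass.coe_eq_one.mp h)) (H.subtype.isOfFinOrder hfo)

theorem subgroupOf_finiteIndex {G : Type*} [Group G] {H K : Subgroup G} (hle : H ≤ K)
    (hfi : H.FiniteIndex) : (H.subgroupOf K).FiniteIndex := by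
  constructor
  intro h0
  have : H.relIndex K ∣ H.index := Subgroup.relIndex_dvd_index_of_le hle
  rw [Subgroup.relIndex, h0] at this
  exact hfi.index_ne_zero (zero_dvd_iff.mp this)

theorem zpowers_subgroupOf {G : Type*} [Group G] (K : Subgroup G) (z : G) (hz : z ∈ K) :
    zpowers (⟨z, hz⟩ : ↥K) = (zpowers z).subgroupOf K := by
  ext x
  simp only [Subgroup.mem_subgroupOf, Subgroup.mem_zpowers_iff]
  constructor
  · rintro ⟨k, hk⟩; exact ⟨k, by rw [← hk]; simp⟩
  · rintro ⟨k, hk⟩; exact ⟨k, Subtype.ext (by simpa using hk)⟩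

theorem cyclic_of_central_tf {K : Type*} [Group K] (htf : ∀ g : K, g ≠ 1 → ¬ IsOfFinOrder g)
    (z : K) (hz : z ∈ center K) (hfi : (zpowers z).FiniteIndex) : IsCyclic K := by
  have hle : zpowers z ≤ center K := zpowers_le.mpr hz
  have hcfi : (center K).FiniteIndex := Subgroup.finiteIndex_of_le hle
  have hinj : Function.Injective (MonoidHom.transferCenterPow K) := by
    rw [injective_iff_map_eq_one]
    intro a ha
    by_contra h1
    refine htf a h1 (isOfFinOrder_iff_pow_eq_one.mpr ⟨(center K).index,
      Nat.pos_of_ne_zero hcfi.index_ne_zero, ?_⟩)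
    have := congrArg Subtype.val ha
    simpa [MonoidHom.transferCenterPow_apply] using this
  have hcyc : IsCyclic ↥(center K) := by
    open scoped IsMulCommutative in refine cyclic_of_comm_tf (htf_subgroup htf _) ⟨z, hz⟩ ?_
    rw [zpowers_subgroupOf]
    exact subgroupOf_finiteIndex hle hfi
  exact isCyclic_of_injective' (MonoidHom.transferCenterPow K) hinj

theorem tf_vc_cyclic {V : Type*} [Group V] (htf : ∀ g : V, g ≠ 1 → ¬ IsOfFinOrder g)
    (h : IsVirtuallyCyclic V) : IsCyclic V := by
  obtain ⟨H, hHc, hHfi⟩ := h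
  by_cases htriv : ∀ g : V, g = 1
  · have : Subsingleton V := ⟨fun a b => by rw [htriv a, htriv b]⟩
    exact isCyclic_of_subsingleton
  push_neg at htriv
  obtain ⟨g0, hg0⟩ := htriv
  haveI := hHfi
  haveI := hHc
  set N := H.normalCore with hNdef
  have hNc : IsCyclic ↥N := Subgroup.isCyclic_of_le H.normalCore_le
  have hidx : N.index ≠ 0 := Subgroup.FiniteIndex.index_ne_zero
  have hg0N : g0 ^ N.index ∈ N := N.pow_index_mem g0
  have hg0N1 : g0 ^ N.index ≠ 1 := by
    intro h1
    exact htf g0 hg0 (isOfFinOrder_iff_pow_eq_one.mpr ⟨N.index, Nat.pos_of_ne_zero hidx, h1⟩)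
  obtain ⟨d, hd⟩ := hNc.exists_generator
  set d' : V := (d : V) with hd'def
  have hd'1 : d' ≠ 1 := by
    intro h1
    obtain ⟨k, hk⟩ := Subgroup.mem_zpowers_iff.mp (hd ⟨g0 ^ N.index, hg0N⟩)
    apply hg0N1
    have h2 := congrArg Subtype.val hk
    simp only [SubgroupClass.coe_zpow] at h2
    rw [← h2, ← hd'def, h1, one_zpow]
  have hNeq : N = zpowers d' := by
    apply le_antisymm
    · intro x hx
      obtain ⟨k, hk⟩ := Subgroup.mem_zpowers_iff.mp (hd ⟨x, hx⟩)
      refine Subgroup.mem_zpowers_iff.mpr ⟨k, ?_⟩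
      have := congrArg Subtype.val hk
      simpa using this
    · exact zpowers_le.mpr d.2
  have hNfi : (zpowers d').FiniteIndex := hNeq ▸ (inferInstance : N.FiniteIndex)
  have hNnorm : (zpowers d').Normal := hNeq ▸ (inferInstance : N.Normal)
  have hd'inf : ¬ IsOfFinOrder d' := htf d' hd'1
  have hinj : Function.Injective fun n : ℤ => d' ^ n :=
    injective_zpow_iff_not_isOfFinOrder.mpr hd'inf
  have hdi : ∀ v : V, v * d' * v⁻¹ = d' ∨ v * d' * v⁻¹ = d'⁻¹ := by
    intro v
    obtain ⟨m, hm⟩ := Subgroup.mem_zpowers_iff.mp (hNnorm.conj_mem d' (mem_zpowers d') v)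
    obtain ⟨l, hl⟩ := Subgroup.mem_zpowers_iff.mp (hNnorm.conj_mem d' (mem_zpowers d') v⁻¹)
    have key : d' ^ (l * m) = d' := by
      calc d' ^ (l * m) = (d' ^ l) ^ m := by rw [zpow_mul]
        _ = (v⁻¹ * d' * v⁻¹⁻¹) ^ m := by rw [hl]
        _ = v⁻¹ * d' ^ m * v⁻¹⁻¹ := conj_zpow
        _ = v⁻¹ * (v * d' * v⁻¹) * v := by rw [hm, inv_inv]
        _ = d' := by group
    have hlm : l * m = 1 := hinj (by simpa using key)
    rcases Int.mul_eq_one_iff_eq_one_or_neg_one.mp hlm with ⟨_, hm1⟩ | ⟨_, hm1⟩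
    · left; rw [← hm, hm1, zpow_one]
    · right; rw [← hm, hm1, zpow_neg, zpow_one]
  set K := centralizer ({d'} : Set V) with hKdef
  have hd'K : d' ∈ K := by
    refine mem_centralizer_iff.mpr ?_
    intro h hh
    rw [Set.mem_singleton_iff] at hh
    rw [hh]
  have hzK : zpowers d' ≤ K := by
    intro x hx
    obtain ⟨k, hk⟩ := Subgroup.mem_zpowers_iff.mp hx
    refine mem_centralizer_iff.mpr ?_
    intro h hh
    rw [Set.mem_singleton_iff] at hh
    subst hh
    rw [← hk]
    exact ((Commute.refl d').zpow_right k).eq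
  have hcenter : (⟨d', hd'K⟩ : ↥K) ∈ center ↥K := by
    rw [Subgroup.mem_center_iff]
    intro y
    exact Subtype.ext (mem_centralizer_iff.mp y.2 d' rfl).symm
  have hKcyc : IsCyclic ↥K := by
    refine cyclic_of_central_tf (htf_subgroup htf K) ⟨d', hd'K⟩ hcenter ?_
    rw [zpowers_subgroupOf]
    exact subgroupOf_finiteIndex hzK hNfi
  obtain ⟨k0, hk0⟩ := hKcyc.exists_generator
  set k : V := (k0 : V) with hkdef
  have hmemK : ∀ x ∈ K, ∃ j : ℤ, x = k ^ j := by
    intro x hx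
    obtain ⟨j, hj⟩ := Subgroup.mem_zpowers_iff.mp (hk0 ⟨x, hx⟩)
    have := congrArg Subtype.val hj
    exact ⟨j, by simpa using this.symm⟩
  obtain ⟨p, hp⟩ := hmemK d' hd'K
  have hp0 : p ≠ 0 := by
    intro h0
    apply hd'1
    rw [hp, h0, zpow_zero]
  have hk1 : k ≠ 1 := by
    intro h1
    apply hd'1
    rw [hp, h1, one_zpow]
  have hkinj : Function.Injective fun n : ℤ => k ^ n :=
    injective_zpow_iff_not_isOfFinOrder.mpr (htf k hk1)
  have hKtop : ∀ t : V, t ∈ K := by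
    intro t
    rcases hdi t with hcase | hcase
    · refine mem_centralizer_iff.mpr ?_
      intro h hh
      rw [Set.mem_singleton_iff] at hh
      subst hh
      have e1 : t * d' = d' * t := by
        have := congrArg (· * t) hcase
        simpa [mul_assoc] using this
      exact e1.symm
    · exfalso
      have ht2 : t * d'⁻¹ * t⁻¹ = d' := by
        have := congrArg Inv.inv hcase
        simpa [mul_inv_rev, mul_assoc] using this
      have e1 : t * d' = d'⁻¹ * t := by
        have := congrArg (· * t) hcase
        simpa [mul_assoc] using this
      have e2 : t * d'⁻¹ = d' * t := by
        have := congrArg (· * t) ht2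
        simpa [mul_assoc] using this
      have hck : d' * k = k * d' := mem_centralizer_iff.mp k0.2 d' rfl
      have hC : Commute d' k := hck
      have hck' : d'⁻¹ * k = k * d'⁻¹ := hC.inv_left.eq
      have htk : t * k * t⁻¹ ∈ K := by
        refine mem_centralizer_iff.mpr ?_
        intro h hh
        rw [Set.mem_singleton_iff] at hh
        subst hh
        calc d' * (t * k * t⁻¹)
            = (t * d'⁻¹ * t⁻¹) * (t * k * t⁻¹) := by rw [ht2]
          _ = t * (d'⁻¹ * k) * t⁻¹ := by group
          _ = t * (k * d'⁻¹) * t⁻¹ := by rw [hck']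
          _ = (t * k * t⁻¹) * (t * d'⁻¹ * t⁻¹) := by group
          _ = (t * k * t⁻¹) * d' := by rw [ht2]
      obtain ⟨q, hq⟩ := hmemK _ htk
      have e3 : k ^ (q * p) = d'⁻¹ := by
        calc k ^ (q * p) = (k ^ q) ^ p := by rw [zpow_mul]
          _ = (t * k * t⁻¹) ^ p := by rw [← hq]
          _ = t * k ^ p * t⁻¹ := conj_zpow
          _ = t * d' * t⁻¹ := by rw [← hp]
          _ = d'⁻¹ := hcase
      have e4 : d'⁻¹ = k ^ (-p) := by rw [hp, zpow_neg]
      have e5 : q * p = -p := hkinj (by simpa using e3.trans e4)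
      have hq1 : q = -1 := by
        have h6 : q * p = -1 * p := by rw [e5]; ring
        exact mul_right_cancel₀ hp0 h6
      have ht2K : t * t ∈ K := by
        refine mem_centralizer_iff.mpr ?_
        intro h hh
        rw [Set.mem_singleton_iff] at hh
        subst hh
        calc d' * (t * t) = (d' * t) * t := by group
          _ = (t * d'⁻¹) * t := by rw [← e2]
          _ = t * (d'⁻¹ * t) := by group
          _ = t * (t * d') := by rw [← e1]
          _ = (t * t) * d' := by group
      obtain ⟨r, hr⟩ := hmemK _ ht2K
      have e6 : k ^ (q * r) = k ^ r := by
        calc k ^ (q * r) = (k ^ q) ^ r := by rw [zpow_mul]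
          _ = (t * k * t⁻¹) ^ r := by rw [← hq]
          _ = t * k ^ r * t⁻¹ := conj_zpow
          _ = t * (t * t) * t⁻¹ := by rw [← hr]
          _ = t * t := by group
          _ = k ^ r := hr
      have e7 : q * r = r := hkinj (by simpa using e6)
      have hr0 : r = 0 := by rw [hq1] at e7; omega
      have htt1 : t * t = 1 := by rw [hr, hr0, zpow_zero]
      by_cases ht1 : t = 1
      · subst ht1
        simp only [one_mul, mul_one, inv_one] at hcase
        refine hd'inf (isOfFinOrder_iff_pow_eq_one.mpr ⟨2, two_pos, ?_⟩)
        rw [pow_two]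
        calc d' * d' = d' * d'⁻¹ := by rw [← hcase]
          _ = 1 := mul_inv_cancel d'
      · refine htf t ht1 (isOfFinOrder_iff_pow_eq_one.mpr ⟨2, two_pos, ?_⟩)
        rw [pow_two]; exact htt1
  have hKeq : K = (⊤ : Subgroup V) := by
    ext x; simp [hKtop x]
  have htopcyc : IsCyclic ↥(⊤ : Subgroup V) := hKeq ▸ hKcyc
  exact isCyclic_of_surjective (Subgroup.topEquiv (G := V)) Subgroup.topEquiv.surjective

theorem stmt_3 {G : Type*} [Group G] (htf : ∀ g : G, g ≠ 1 → ¬ IsOfFinOrder g) :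
    HasBVC G ↔ ∃ s : Finset G, ∀ x : G, ∃ g ∈ s, ∃ k : ℤ, IsConj (g ^ k) x := by
  classical
  constructor
  · rintro ⟨S, hS1, hS2⟩
    refine ⟨S.image (fun V : Subgroup G =>
      if h : ∃ g : ↥V, ∀ x : ↥V, x ∈ zpowers g then ↑h.choose else 1), ?_⟩
    intro x
    have hWvc : IsVirtuallyCyclic ↥(zpowers x) := by
      refine ⟨⊤, ?_, inferInstance⟩
      haveI : IsCyclic ↥(zpowers x) := isCyclic_zpowers' x
      exact isCyclic_of_surjective (Subgroup.topEquiv (G := ↥(zpowers x))).symm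
        (Subgroup.topEquiv (G := ↥(zpowers x))).symm.surjective
    obtain ⟨V, hVS, g, hmap⟩ := hS2 _ hWvc
    have hxV : g * x * g⁻¹ ∈ V := by
      apply hmap
      exact Subgroup.mem_map.mpr ⟨x, mem_zpowers x, by simp [MulAut.conj_apply]⟩
    have hVcyc : ∃ gg : ↥V, ∀ y : ↥V, y ∈ zpowers gg :=
      (tf_vc_cyclic (htf_subgroup htf V) (hS1 V hVS)).exists_generator
    refine ⟨_, Finset.mem_image_of_mem _ hVS, ?_⟩
    rw [dif_pos hVcyc]
    obtain ⟨kk, hkk⟩ := Subgroup.mem_zpowers_iff.mp (hVcyc.choose_spec ⟨g * x * g⁻¹, hxV⟩)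
    refine ⟨kk, isConj_iff.mpr ⟨g⁻¹, ?_⟩⟩
    have hco := congrArg Subtype.val hkk
    simp only [SubgroupClass.coe_zpow] at hco
    rw [inv_inv]
    calc g⁻¹ * (↑hVcyc.choose : G) ^ kk * g = g⁻¹ * (g * x * g⁻¹) * g := by rw [hco]
      _ = x := by group
  · rintro ⟨s, hs⟩
    refine ⟨s.image (fun g => zpowers g), ?_, ?_⟩
    · intro V hV
      simp only [Finset.mem_image] at hV
      obtain ⟨g, _, rfl⟩ := hV
      haveI : IsCyclic ↥(zpowers g) := isCyclic_zpowers' g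
      exact ⟨⊤, isCyclic_of_surjective (Subgroup.topEquiv (G := ↥(zpowers g))).symm
        (Subgroup.topEquiv (G := ↥(zpowers g))).symm.surjective, inferInstance⟩
    · intro W hW
      obtain ⟨w0, hw0⟩ := (tf_vc_cyclic (htf_subgroup htf W) hW).exists_generator
      obtain ⟨g, hgs, kk, hconj⟩ := hs ↑w0
      obtain ⟨c, hc⟩ := isConj_iff.mp hconj
      refine ⟨zpowers g, Finset.mem_image_of_mem _ hgs, c⁻¹, ?_⟩
      rintro y hy
      rw [Subgroup.mem_map] at hy
      obtain ⟨z, hz, rfl⟩ := hy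
      obtain ⟨j, hj⟩ := Subgroup.mem_zpowers_iff.mp (hw0 ⟨z, hz⟩)
      have hzw : z = (↑w0 : G) ^ j := by
        have := congrArg Subtype.val hj
        simpa using this.symm
      have hkey : (MulAut.conj c⁻¹).toMonoidHom z = g ^ (kk * j) := by
        show c⁻¹ * z * c⁻¹⁻¹ = g ^ (kk * j)
        calc c⁻¹ * z * c⁻¹⁻¹ = c⁻¹ * (↑w0 : G) ^ j * c⁻¹⁻¹ := by rw [hzw]
          _ = (c⁻¹ * (↑w0 : G) * c⁻¹⁻¹) ^ j := (conj_zpow).symm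
          _ = (g ^ kk) ^ j := by rw [inv_inv, ← hc]; group
          _ = g ^ (kk * j) := by rw [← zpow_mul]
      rw [hkey]
      exact Subgroup.mem_zpowers_iff.mpr ⟨kk * j, rfl⟩
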